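/- Let (A, α) be a unital commutative imprimitive Kreĭn C*-algebra with fundamental symmetry α and let ε be an odd symmetry compatible with α. Let Ω(A, α, ε) denote the space of even characters on (A, α), equipped with the topology of pointwise convergence (it is a compact Hausdorff space). Then the Gel'fand transform φ : A → C(Ω(A, α, ε), 𝕂), defined by φ(a)(w) := w(a) for a ∈ A and w ∈ Ω(A, α, ε), is a bijective unital ℂ-linear multiplicative map satisfying φ(a*) = φ(a)* (where the involution on C(Ω(A, α, ε), 𝕂) is pointwise) and ‖φ(a)‖ = ‖a‖ for all a ∈ A (with the supremum norm on C(Ω(A, α, ε), 𝕂)); i.e. φ is an isometric *-isomorphism. -/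

import Mathlib

noncomputable section

open scoped Matrix.Norms.L2Operator

/-- Membership in the Kreĭn C*-algebra `𝕂` of matrices `T_{a,b} = !![a, b; b, a]`. -/
def Kmem (M : Matrix (Fin 2) (Fin 2) ℂ) : Prop :=
  M 0 0 = M 1 1 ∧ M 0 1 = M 1 0

/-- The involution of `𝕂`: `T_{a,b}* = T_{conj a, -conj b}`. -/
noncomputable def Kst (M : Matrix (Fin 2) (Fin 2) ℂ) : Matrix (Fin 2) (Fin 2) ℂ :=
  Matrix.of fun i j => if i = j then starRingEnd ℂ (M i j) else -starRingEnd ℂ (M i j)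

/-- The fundamental symmetry of `𝕂`: `γ (T_{a,b}) = T_{a,-b}`. -/
def Kgamma (M : Matrix (Fin 2) (Fin 2) ℂ) : Matrix (Fin 2) (Fin 2) ℂ :=
  Matrix.of fun i j => if i = j then M i j else -M i j

/-- The odd symmetry of `𝕂`: `ε (T_{a,b}) = T_{b,a}`. -/
def Keps (M : Matrix (Fin 2) (Fin 2) ℂ) : Matrix (Fin 2) (Fin 2) ℂ :=
  Matrix.of fun i j => M i (j + 1)

/-- A character on a Kreĭn C*-algebra `(A, α)`: a unital ℂ-linear multiplicative map
`w : A → 𝕂` with `w (star x) = (w x)*` and `w ∘ α = γ ∘ w`. -/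
def IsKChar {A : Type*} [NormedRing A] [NormedAlgebra ℂ A] [StarRing A]
    (α : A → A) (w : A → Matrix (Fin 2) (Fin 2) ℂ) : Prop :=
  (∀ x, Kmem (w x)) ∧
  (∀ x y, w (x + y) = w x + w y) ∧
  (∀ (c : ℂ) (x : A), w (c • x) = c • w x) ∧
  (∀ x y, w (x * y) = w x * w y) ∧
  w 1 = 1 ∧
  (∀ x, w (star x) = Kst (w x)) ∧
  (∀ x, w (α x) = Kgamma (w x))

/-- `(A, α)` is imprimitive (full): the norm-closure of the linear span of the products of
odd elements is the whole even part. -/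
def Imprimitive {A : Type*} [NormedRing A] [NormedAlgebra ℂ A]
    (α : A → A) : Prop :=
  closure ((Submodule.span ℂ {z : A | ∃ x y, α x = -x ∧ α y = -y ∧ z = x * y} :
      Submodule ℂ A) : Set A)
    = {x : A | α x = x}

/-- A character `w` is even (w.r.t. the odd symmetry `ε`) if `ε_𝕂 ∘ w ∘ ε = w`. -/
def IsEven {A : Type*} (ε : A → A) (w : A → Matrix (Fin 2) (Fin 2) ℂ) : Prop :=
  ∀ x, Keps (w (ε x)) = w x


set_option maxHeartbeats 1600000 in
private lemma key_ineq_aux (a b v0 v1 : ℂ) :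
    ‖a*v0 + b*v1‖^2 + ‖b*v0 + a*v1‖^2 ≤ (max ‖a+b‖ ‖a-b‖)^2 * (‖v0‖^2 + ‖v1‖^2) := by
  have h1 : ∀ z : ℂ, ‖z‖^2 = z.re^2 + z.im^2 := fun z => by
    rw [Complex.sq_norm, Complex.normSq_apply]; ring
  rcases le_total ‖a+b‖ ‖a-b‖ with h | h
  · rw [max_eq_right h]
    have h2 : ‖a+b‖^2 ≤ ‖a-b‖^2 := by nlinarith [norm_nonneg (a+b), norm_nonneg (a-b)]
    simp only [h1, Complex.add_re, Complex.add_im, Complex.mul_re, Complex.mul_im,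
      Complex.sub_re, Complex.sub_im] at h2 ⊢
    nlinarith [sq_nonneg (v0.re + v1.re), sq_nonneg (v0.im + v1.im), sq_nonneg (v0.re - v1.re),
      sq_nonneg (v0.im - v1.im), h2]
  · rw [max_eq_left h]
    have h2 : ‖a-b‖^2 ≤ ‖a+b‖^2 := by nlinarith [norm_nonneg (a+b), norm_nonneg (a-b)]
    simp only [h1, Complex.add_re, Complex.add_im, Complex.mul_re, Complex.mul_im,
      Complex.sub_re, Complex.sub_im] at h2 ⊢
    nlinarith [sq_nonneg (v0.re + v1.re), sq_nonneg (v0.im + v1.im), sq_nonneg (v0.re - v1.re),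
      sq_nonneg (v0.im - v1.im), h2]

private lemma euc_norm_aux (v : EuclideanSpace ℂ (Fin 2)) :
    ‖v‖ = Real.sqrt (‖v 0‖^2 + ‖v 1‖^2) := by
  rw [EuclideanSpace.norm_eq, Fin.sum_univ_two]

set_option maxHeartbeats 1600000 in
private lemma Knorm_eq_aux (a b : ℂ) :
    ‖(!![a,b;b,a] : Matrix (Fin 2) (Fin 2) ℂ)‖ = max ‖a+b‖ ‖a-b‖ := by
  have hC : (0:ℝ) ≤ max ‖a+b‖ ‖a-b‖ := le_max_of_le_left (norm_nonneg _)
  have happ : ∀ v : EuclideanSpace ℂ (Fin 2),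
      Matrix.toEuclideanLin (!![a,b;b,a] : Matrix (Fin 2) (Fin 2) ℂ) v
        = (WithLp.equiv 2 (Fin 2 → ℂ)).symm ![a * v 0 + b * v 1, b * v 0 + a * v 1] := by
    intro v
    rw [Matrix.toEuclideanLin_apply]
    congr 1
    funext i
    fin_cases i <;>
      simp [Matrix.mulVec, dotProduct, Fin.sum_univ_two]
  apply le_antisymm
  · rw [Matrix.l2_opNorm_def]
    apply ContinuousLinearMap.opNorm_le_bound _ hC
    intro v
    have hcv : (LinearMap.toContinuousLinearMap (Matrix.toEuclideanLin
        (!![a,b;b,a] : Matrix (Fin 2) (Fin 2) ℂ))) v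
        = Matrix.toEuclideanLin (!![a,b;b,a] : Matrix (Fin 2) (Fin 2) ℂ) v := rfl
    rw [LinearEquiv.trans_apply, hcv, happ v, euc_norm_aux, euc_norm_aux]
    have hv0 : ((WithLp.equiv 2 (Fin 2 → ℂ)).symm ![a * v 0 + b * v 1, b * v 0 + a * v 1] :
        EuclideanSpace ℂ (Fin 2)) 0 = a * v 0 + b * v 1 := rfl
    have hv1 : ((WithLp.equiv 2 (Fin 2 → ℂ)).symm ![a * v 0 + b * v 1, b * v 0 + a * v 1] :
        EuclideanSpace ℂ (Fin 2)) 1 = b * v 0 + a * v 1 := rfl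
    rw [hv0, hv1]
    rw [show (max ‖a+b‖ ‖a-b‖) * Real.sqrt (‖v 0‖^2 + ‖v 1‖^2)
        = Real.sqrt ((max ‖a+b‖ ‖a-b‖)^2 * (‖v 0‖^2 + ‖v 1‖^2)) by
      rw [Real.sqrt_mul (sq_nonneg _), Real.sqrt_sq hC]]
    exact Real.sqrt_le_sqrt (key_ineq_aux a b (v 0) (v 1))
  · apply max_le
    · have h := (LinearEquiv.trans Matrix.toEuclideanLin LinearMap.toContinuousLinearMap
          (!![a,b;b,a] : Matrix (Fin 2) (Fin 2) ℂ)).le_opNorm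
          ((WithLp.equiv 2 (Fin 2 → ℂ)).symm ![(1:ℂ),1])
      have e1 : (LinearEquiv.trans Matrix.toEuclideanLin LinearMap.toContinuousLinearMap
          (!![a,b;b,a] : Matrix (Fin 2) (Fin 2) ℂ)) ((WithLp.equiv 2 (Fin 2 → ℂ)).symm ![(1:ℂ),1])
          = (WithLp.equiv 2 (Fin 2 → ℂ)).symm ![a + b, b + a] := by
        rw [LinearEquiv.trans_apply]
        show Matrix.toEuclideanLin _ _ = _
        rw [happ]
        congr 1
        funext i
        fin_cases i <;> simp
      rw [e1] at h
      have e2 : ‖((WithLp.equiv 2 (Fin 2 → ℂ)).symm ![a + b, b + a] : EuclideanSpace ℂ (Fin 2))‖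
          = ‖a + b‖ * Real.sqrt 2 := by
        rw [euc_norm_aux]
        have h0 : ((WithLp.equiv 2 (Fin 2 → ℂ)).symm ![a+b, b+a] :
            EuclideanSpace ℂ (Fin 2)) 0 = a + b := rfl
        have h1 : ((WithLp.equiv 2 (Fin 2 → ℂ)).symm ![a+b, b+a] :
            EuclideanSpace ℂ (Fin 2)) 1 = b + a := rfl
        rw [h0, h1, add_comm b a]
        rw [show ‖a+b‖^2 + ‖a+b‖^2 = (‖a+b‖)^2 * 2 by ring, Real.sqrt_mul (sq_nonneg _),
          Real.sqrt_sq (norm_nonneg _)]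
      have e3 : ‖((WithLp.equiv 2 (Fin 2 → ℂ)).symm ![(1:ℂ),1] : EuclideanSpace ℂ (Fin 2))‖
          = Real.sqrt 2 := by
        rw [euc_norm_aux]
        have h0 : ((WithLp.equiv 2 (Fin 2 → ℂ)).symm ![(1:ℂ),1] :
            EuclideanSpace ℂ (Fin 2)) 0 = 1 := rfl
        have h1 : ((WithLp.equiv 2 (Fin 2 → ℂ)).symm ![(1:ℂ),1] :
            EuclideanSpace ℂ (Fin 2)) 1 = 1 := rfl
        rw [h0, h1]; norm_num
      rw [e2, e3] at h
      have h2 : (0:ℝ) < Real.sqrt 2 := by positivity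
      rw [Matrix.l2_opNorm_def]
      exact le_of_mul_le_mul_right h h2
    · have h := (LinearEquiv.trans Matrix.toEuclideanLin LinearMap.toContinuousLinearMap
          (!![a,b;b,a] : Matrix (Fin 2) (Fin 2) ℂ)).le_opNorm
          ((WithLp.equiv 2 (Fin 2 → ℂ)).symm ![(1:ℂ),-1])
      have e1 : (LinearEquiv.trans Matrix.toEuclideanLin LinearMap.toContinuousLinearMap
          (!![a,b;b,a] : Matrix (Fin 2) (Fin 2) ℂ)) ((WithLp.equiv 2 (Fin 2 → ℂ)).symm ![(1:ℂ),-1])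
          = (WithLp.equiv 2 (Fin 2 → ℂ)).symm ![a - b, b - a] := by
        rw [LinearEquiv.trans_apply]
        show Matrix.toEuclideanLin _ _ = _
        rw [happ]
        congr 1
        funext i
        fin_cases i <;> simp <;> ring
      rw [e1] at h
      have e2 : ‖((WithLp.equiv 2 (Fin 2 → ℂ)).symm ![a - b, b - a] : EuclideanSpace ℂ (Fin 2))‖
          = ‖a - b‖ * Real.sqrt 2 := by
        rw [euc_norm_aux]
        have h0 : ((WithLp.equiv 2 (Fin 2 → ℂ)).symm ![a-b, b-a] :
            EuclideanSpace ℂ (Fin 2)) 0 = a - b := rfl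
        have h1 : ((WithLp.equiv 2 (Fin 2 → ℂ)).symm ![a-b, b-a] :
            EuclideanSpace ℂ (Fin 2)) 1 = b - a := rfl
        rw [h0, h1, norm_sub_rev b a]
        rw [show ‖a-b‖^2 + ‖a-b‖^2 = (‖a-b‖)^2 * 2 by ring, Real.sqrt_mul (sq_nonneg _),
          Real.sqrt_sq (norm_nonneg _)]
      have e3 : ‖((WithLp.equiv 2 (Fin 2 → ℂ)).symm ![(1:ℂ),-1] : EuclideanSpace ℂ (Fin 2))‖
          = Real.sqrt 2 := by
        rw [euc_norm_aux]
        have h0 : ((WithLp.equiv 2 (Fin 2 → ℂ)).symm ![(1:ℂ),-1] :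
            EuclideanSpace ℂ (Fin 2)) 0 = 1 := rfl
        have h1 : ((WithLp.equiv 2 (Fin 2 → ℂ)).symm ![(1:ℂ),-1] :
            EuclideanSpace ℂ (Fin 2)) 1 = -1 := rfl
        rw [h0, h1]; norm_num
      rw [e2, e3] at h
      have h2 : (0:ℝ) < Real.sqrt 2 := by positivity
      rw [Matrix.l2_opNorm_def]
      exact le_of_mul_le_mul_right h h2

/-- The type synonym carrying the C*-structure `x† := α (x*)`. -/
def KCsyn (A : Type*) (_α : A → A) : Type _ := A

/-- matrix-valued character built from a scalar character -/
def Wc {A : Type*} (α : A → A) (χ : A → ℂ) : A → Matrix (Fin 2) (Fin 2) ℂ :=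
  fun x => !![(χ x + χ (α x))/2, (χ x - χ (α x))/2; (χ x - χ (α x))/2, (χ x + χ (α x))/2]

lemma Wc_pl {A : Type*} (α : A → A) (χ : A → ℂ) (x : A) :
    Wc α χ x 0 0 + Wc α χ x 0 1 = χ x := by
  simp [Wc]; ring

lemma Wc_mn {A : Type*} (α : A → A) (χ : A → ℂ) (x : A) :
    Wc α χ x 0 0 - Wc α χ x 0 1 = χ (α x) := by
  simp [Wc]; ring

set_option maxHeartbeats 1600000 in
lemma Wc_mem {A : Type*} [NormedRing A] [NormedAlgebra ℂ A] [StarRing A]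
    (α ε : A → A) (χ : A → ℂ)
    (hα1 : α 1 = 1)
    (hadd : ∀ x y : A, α (x + y) = α x + α y)
    (hsmul : ∀ (c : ℂ) (x : A), α (c • x) = c • α x)
    (hmul : ∀ x y : A, α (x * y) = α x * α y)
    (hstar : ∀ x : A, α (star x) = star (α x))
    (hinvol : ∀ x : A, α (α x) = x)
    (hεx : ∀ x : A, ε x = ε 1 * x)
    (hαε : α (ε 1) = -ε 1)
    (hχ1 : χ 1 = 1)
    (hχa : ∀ x y : A, χ (x + y) = χ x + χ y)
    (hχs : ∀ (c : ℂ) (x : A), χ (c • x) = c * χ x)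
    (hχm : ∀ x y : A, χ (x * y) = χ x * χ y)
    (hχst : ∀ x : A, χ (α (star x)) = starRingEnd ℂ (χ x))
    (hχe : χ (ε 1) = 1) :
    IsKChar α (Wc α χ) ∧ IsEven ε (Wc α χ) := by
  have hχn : ∀ x : A, χ (-x) = -χ x := fun x => by
    rw [← neg_one_smul ℂ x, hχs]; ring
  have hχst' : ∀ x : A, χ (star x) = starRingEnd ℂ (χ (α x)) := fun x => by
    have := hχst (α x)
    rwa [← hstar, hinvol] at this
  refine ⟨⟨fun x => ⟨by simp [Wc], by simp [Wc]⟩, ?_, ?_, ?_, ?_, ?_, ?_⟩, ?_⟩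
  · intro x y
    ext i j
    fin_cases i <;> fin_cases j <;>
      simp [Wc, hadd, hχa] <;> ring
  · intro c x
    ext i j
    fin_cases i <;> fin_cases j <;>
      simp [Wc, hsmul, hχs, smul_eq_mul] <;> ring
  · intro x y
    have hm : Wc α χ x * Wc α χ y =
        !![Wc α χ x 0 0 * Wc α χ y 0 0 + Wc α χ x 0 1 * Wc α χ y 1 0,
           Wc α χ x 0 0 * Wc α χ y 0 1 + Wc α χ x 0 1 * Wc α χ y 1 1;
           Wc α χ x 1 0 * Wc α χ y 0 0 + Wc α χ x 1 1 * Wc α χ y 1 0,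
           Wc α χ x 1 0 * Wc α χ y 0 1 + Wc α χ x 1 1 * Wc α χ y 1 1] := by
      ext i j
      fin_cases i <;> fin_cases j <;>
        simp [Matrix.mul_apply, Fin.sum_univ_two]
    rw [hm]
    ext i j
    fin_cases i <;> fin_cases j <;>
      simp [Wc, hmul, hχm] <;> ring
  · ext i j
    fin_cases i <;> fin_cases j <;>
      simp [Wc, hα1, hχ1, Matrix.one_apply]
  · intro x
    ext i j
    fin_cases i <;> fin_cases j <;>
      simp [Wc, Kst, hχst, hχst', hinvol, map_div₀, map_add, map_sub, map_ofNat] <;> ring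
  · intro x
    ext i j
    fin_cases i <;> fin_cases j <;>
      simp [Wc, Kgamma, hinvol] <;> ring
  · intro x
    have h1 : χ (ε x) = χ x := by rw [hεx, hχm, hχe, one_mul]
    have h2 : χ (α (ε x)) = -χ (α x) := by
      rw [hεx, hmul, hαε, neg_mul, hχn, hχm, hχe, one_mul]
    ext i j
    fin_cases i <;> fin_cases j <;>
      simp [Wc, Keps, h1, h2, show ((0:Fin 2)+1) = 1 from rfl,
        show ((1:Fin 2)+1) = 0 from rfl] <;> ring

set_option maxHeartbeats 1600000 in
lemma w_props {A : Type*} [NormedRing A] [NormedAlgebra ℂ A] [StarRing A]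
    (α ε : A → A) (w : A → Matrix (Fin 2) (Fin 2) ℂ)
    (hw : IsKChar α w) (hev : IsEven ε w) :
    (w 0 = 0) ∧
    (w 1 0 0 + w 1 0 1 = 1) ∧
    (∀ x y : A, w (x+y) 0 0 + w (x+y) 0 1 = (w x 0 0 + w x 0 1) + (w y 0 0 + w y 0 1)) ∧
    (∀ (c : ℂ) (x : A), w (c • x) 0 0 + w (c • x) 0 1 = c * (w x 0 0 + w x 0 1)) ∧
    (∀ x y : A, w (x*y) 0 0 + w (x*y) 0 1 = (w x 0 0 + w x 0 1) * (w y 0 0 + w y 0 1)) ∧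
    (∀ x : A, w (α (star x)) 0 0 + w (α (star x)) 0 1 = starRingEnd ℂ (w x 0 0 + w x 0 1)) ∧
    (w (ε 1) 0 0 + w (ε 1) 0 1 = 1) ∧
    (∀ x : A, w x = Wc α (fun y => w y 0 0 + w y 0 1) x) := by
  obtain ⟨hmem, hadd, hsmul, hmul, hone, hstar, hgam⟩ := hw
  have e00 : w (ε 1) 0 0 = 0 := by
    have h := hev 1
    have := congrFun (congrFun h 0) 1
    simp [Keps, hone, Matrix.one_apply, show ((1:Fin 2)+1) = 0 from rfl] at this
    exact this
  have e01 : w (ε 1) 0 1 = 1 := by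
    have h := hev 1
    have := congrFun (congrFun h 0) 0
    simp [Keps, hone, Matrix.one_apply, show ((0:Fin 2)+1) = 1 from rfl] at this
    exact this
  have hga : ∀ x : A, w (α x) 0 0 = w x 0 0 ∧ w (α x) 0 1 = - w x 0 1 := fun x => by
    constructor
    · have := congrFun (congrFun (hgam x) 0) 0; simpa [Kgamma] using this
    · have := congrFun (congrFun (hgam x) 0) 1; simpa [Kgamma] using this
  have h0 : w 0 = 0 := by
    have h := hsmul 0 0
    rwa [zero_smul, zero_smul] at h
  refine ⟨h0, ?_, ?_, ?_, ?_, ?_, ?_, ?_⟩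
  · simp [hone, Matrix.one_apply]
  · intro x y; rw [hadd]; simp [Matrix.add_apply]; ring
  · intro c x; rw [hsmul]; simp [Matrix.smul_apply, smul_eq_mul]; ring
  · intro x y
    rw [hmul]
    have h00 : (w x * w y) 0 0 = w x 0 0 * w y 0 0 + w x 0 1 * w y 1 0 := by
      simp [Matrix.mul_apply, Fin.sum_univ_two]
    have h01 : (w x * w y) 0 1 = w x 0 0 * w y 0 1 + w x 0 1 * w y 1 1 := by
      simp [Matrix.mul_apply, Fin.sum_univ_two]
    rw [h00, h01, ← (hmem y).1, ← (hmem y).2]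
    ring
  · intro x
    rw [hgam, hstar]
    simp [Kgamma, Kst, map_add]
  · rw [e00, e01]; ring
  · intro x
    have hx0 := hga x
    ext i j
    fin_cases i <;> fin_cases j <;>
      simp [Wc, hx0.1, hx0.2, (hmem x).1, (hmem x).2] <;> ring_nf

lemma Kmem_eq {M : Matrix (Fin 2) (Fin 2) ℂ} (h : Kmem M) :
    M = !![M 0 0, M 0 1; M 0 1, M 0 0] := by
  ext i j
  fin_cases i <;> fin_cases j <;> simp [← h.1, ← h.2]

lemma Knorm_of_mem {M : Matrix (Fin 2) (Fin 2) ℂ} (h : Kmem M) :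
    ‖M‖ = max ‖M 0 0 + M 0 1‖ ‖M 0 0 - M 0 1‖ :=
  (congrArg norm (Kmem_eq h)).trans (Knorm_eq_aux _ _)

lemma cont_into_matrix {Y : Type*} [TopologicalSpace Y] (f : Y → Matrix (Fin 2) (Fin 2) ℂ)
    (h : ∀ i j, Continuous fun y => f y i j) : Continuous f := by
  exact (LinearMap.continuous_of_finiteDimensional
    ({ toFun := Matrix.of, map_add' := fun _ _ => rfl, map_smul' := fun _ _ => rfl } :
      (Fin 2 → Fin 2 → ℂ) →ₗ[ℂ] Matrix (Fin 2) (Fin 2) ℂ)).comp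
    (continuous_pi fun i => continuous_pi fun j => h i j)

lemma matrix_entry_cont (i j : Fin 2) :
    Continuous fun M : Matrix (Fin 2) (Fin 2) ℂ => M i j := by
  exact LinearMap.continuous_of_finiteDimensional
    ({ toFun := fun M => M i j, map_add' := fun _ _ => rfl, map_smul' := fun _ _ => rfl } :
      Matrix (Fin 2) (Fin 2) ℂ →ₗ[ℂ] ℂ)

/-- **Spectral theorem.** For a unital commutative imprimitive Kreĭn
C*-algebra `(A, α)` with compatible odd symmetry `ε`, the Gel'fand transform
`a ↦ (w ↦ w a)`, from `A` to the continuous `𝕂`-valued functions on the space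
`Ω(A, α, ε)` of even characters (with the topology of pointwise convergence), is an
isometric *-isomorphism onto `C(Ω(A, α, ε), 𝕂)`. -/
theorem krein_gelfand_spectral_theorem {A : Type*} [NormedRing A] [NormedAlgebra ℂ A]
    [StarRing A] [StarModule ℂ A] [CompleteSpace A]
(α : A → A)
    (hadd : ∀ x y : A, α (x + y) = α x + α y)
    (hsmul : ∀ (c : ℂ) (x : A), α (c • x) = c • α x)
    (hmul : ∀ x y : A, α (x * y) = α x * α y)
    (hstar : ∀ x : A, α (star x) = star (α x))
    (hinvol : ∀ x : A, α (α x) = x)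
    (hfs : ∀ x : A, ‖α (star x) * x‖ = ‖x‖ ^ 2)
    (hcomm : ∀ x y : A, x * y = y * x)
    (himp : Imprimitive α)
(ε : A → A)
    (headd : ∀ x y : A, ε (x + y) = ε x + ε y)
    (hesmul : ∀ (c : ℂ) (x : A), ε (c • x) = c • ε x)
    (heinvol : ∀ x : A, ε (ε x) = x)
    (hestar : ∀ x : A, ε (star x) = -star (ε x))
    (hemul_l : ∀ x y : A, ε (x * y) = ε x * y)
    (hemul_r : ∀ x y : A, ε (x * y) = x * ε y)
    (hecompat : ∀ x : A, ε (α x) = -α (ε x)) :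
    -- the Gel'fand transform of any element is a continuous 𝕂-valued function
    (∀ a : A, Continuous
      (fun w : {w : A → Matrix (Fin 2) (Fin 2) ℂ // IsKChar α w ∧ IsEven ε w} => w.1 a)) ∧
    (∀ (a : A) (w : {w : A → Matrix (Fin 2) (Fin 2) ℂ // IsKChar α w ∧ IsEven ε w}),
      Kmem (w.1 a)) ∧
    -- it is a unital ℂ-linear multiplicative map preserving the involutions
    (∀ (a b : A) (w : {w : A → Matrix (Fin 2) (Fin 2) ℂ // IsKChar α w ∧ IsEven ε w}),
      w.1 (a * b) = w.1 a * w.1 b ∧ w.1 (a + b) = w.1 a + w.1 b) ∧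
    (∀ (c : ℂ) (a : A) (w : {w : A → Matrix (Fin 2) (Fin 2) ℂ // IsKChar α w ∧ IsEven ε w}),
      w.1 (c • a) = c • w.1 a) ∧
    (∀ w : {w : A → Matrix (Fin 2) (Fin 2) ℂ // IsKChar α w ∧ IsEven ε w}, w.1 1 = 1) ∧
    (∀ (a : A) (w : {w : A → Matrix (Fin 2) (Fin 2) ℂ // IsKChar α w ∧ IsEven ε w}),
      w.1 (star a) = Kst (w.1 a)) ∧
    -- it is injective
    (∀ a b : A,
      (∀ w : {w : A → Matrix (Fin 2) (Fin 2) ℂ // IsKChar α w ∧ IsEven ε w}, w.1 a = w.1 b)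
        → a = b) ∧
    -- it is surjective onto the continuous 𝕂-valued functions
    (∀ f : {w : A → Matrix (Fin 2) (Fin 2) ℂ // IsKChar α w ∧ IsEven ε w}
        → Matrix (Fin 2) (Fin 2) ℂ,
      Continuous f → (∀ w, Kmem (f w)) →
        ∃ a : A, ∀ w, w.1 a = f w) ∧
    -- it is isometric for the sup-norm on `C(Ω(A, α, ε), 𝕂)`
    (∀ a : A,
      (⨆ w : {w : A → Matrix (Fin 2) (Fin 2) ℂ // IsKChar α w ∧ IsEven ε w}, ‖w.1 a‖)
        = ‖a‖) := by
    classical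
  have hcont1 : ∀ a : A, Continuous
      (fun w : {w : A → Matrix (Fin 2) (Fin 2) ℂ // IsKChar α w ∧ IsEven ε w} => w.1 a) :=
    fun a => (continuous_apply a).comp continuous_subtype_val
  by_cases hS : Subsingleton A
  · have hempty : IsEmpty {w : A → Matrix (Fin 2) (Fin 2) ℂ // IsKChar α w ∧ IsEven ε w} := by
      constructor
      rintro ⟨w, hw, -⟩
      have h0 : w 0 = 0 := by
        have h := hw.2.2.1 0 0
        rwa [zero_smul, zero_smul] at h
      have h10 : (1 : A) = 0 := Subsingleton.elim _ _
      have h1 : w 1 = 1 := hw.2.2.2.2.1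
      rw [h10, h0] at h1
      exact zero_ne_one h1
    refine ⟨hcont1, fun a w => w.2.1.1 a, fun a b w => ⟨w.2.1.2.2.2.1 a b, w.2.1.2.1 a b⟩,
      fun c a w => w.2.1.2.2.1 c a, fun w => w.2.1.2.2.2.2.1, fun a w => w.2.1.2.2.2.2.2.1 a,
      fun a b _ => Subsingleton.elim a b,
      fun f _ _ => ⟨0, fun w => (hempty.false w).elim⟩,
      fun a => ?_⟩
    haveI := hempty
    rw [Real.iSup_of_isEmpty, Subsingleton.elim a 0, norm_zero]
  · haveI hnt : Nontrivial A := not_subsingleton_iff_nontrivial.mp hS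
    letI i1 : NormedCommRing (KCsyn A α) :=
      { (inferInstance : NormedRing A) with mul_comm := hcomm }
    letI i2 : StarRing (KCsyn A α) :=
      { star := fun x => α (star x)
        star_involutive := fun (x : A) => by
          show α (star (α (star x))) = x
          rw [← hstar, star_star, hinvol]
        star_mul := fun (x y : A) => by
          show α (star (x * y)) = α (star y) * α (star x)
          rw [star_mul, hmul]
        star_add := fun (x y : A) => by
          show α (star (x + y)) = α (star x) + α (star y)
          rw [star_add, hadd] }
    letI i3 : NormedAlgebra ℂ (KCsyn A α) :=
      { (inferInstance : Algebra ℂ A) with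
        norm_smul_le := fun c (x : A) => norm_smul_le c x }
    letI i4 : StarModule ℂ (KCsyn A α) := ⟨fun c (x : A) => by
      show α (star (c • x)) = (starRingEnd ℂ) c • α (star x)
      rw [star_smul, hsmul]; rfl⟩
    letI i6 : CompleteSpace (KCsyn A α) := (inferInstance : CompleteSpace A)
    letI i5 : CStarRing (KCsyn A α) := ⟨fun x => by
      obtain ⟨y, rfl⟩ : ∃ y : A, (y : KCsyn A α) = x := ⟨x, rfl⟩
      show ‖y‖ * ‖y‖ ≤ ‖α (star y) * y‖
      rw [hfs, sq]⟩
    letI i7 : CStarAlgebra (KCsyn A α) := { i1.toNormedRing, i2, i6, i5, i3, i4 with }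
    letI i8 : CommCStarAlgebra (KCsyn A α) := { i1, i7 with }
    letI i9 : Nontrivial (KCsyn A α) := hnt
    letI i10 : NormOneClass (KCsyn A α) := ⟨CStarRing.norm_one⟩
    -- basic consequences of the axioms
    have hα1 : α (1 : A) = 1 := by
      have h := hmul 1 (α 1)
      rw [one_mul, hinvol, mul_one] at h
      exact h.symm
    have hα0 : α (0 : A) = 0 := by
      have h := hsmul 0 0
      rwa [zero_smul, zero_smul] at h
    have hεx : ∀ x : A, ε x = ε 1 * x := fun x => by
      have h := hemul_l 1 x
      rwa [one_mul] at h
    have he2 : ε 1 * ε 1 = (1 : A) := by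
      rw [← hεx (ε 1)]
      exact heinvol 1
    have hαe : α (ε 1) = -ε 1 := by
      have h := hecompat 1
      rw [hα1] at h
      exact neg_eq_iff_eq_neg.mp h.symm
    -- the canonical algebra endomorphism given by α
    let αalg : KCsyn A α →ₐ[ℂ] KCsyn A α :=
      { toFun := α
        map_one' := hα1
        map_mul' := hmul
        map_zero' := hα0
        map_add' := hadd
        commutes' := fun c => by
          show α (algebraMap ℂ A c) = algebraMap ℂ A c
          rw [Algebra.algebraMap_eq_smul_one, hsmul, hα1] }
    let χα : WeakDual.characterSpace ℂ (KCsyn A α) → WeakDual.characterSpace ℂ (KCsyn A α) :=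
      fun χ => WeakDual.CharacterSpace.equivAlgHom.symm
        ((WeakDual.CharacterSpace.equivAlgHom χ).comp αalg)
    have hχα : ∀ (χ : WeakDual.characterSpace ℂ (KCsyn A α)) (x : A), χα χ x = χ (α x) :=
      fun χ x => rfl
    -- dichotomy for the value at ε 1
    have hdi : ∀ χ : WeakDual.characterSpace ℂ (KCsyn A α), χ (ε 1) = 1 ∨ χ (ε 1) = -1 := by
      intro χ
      refine mul_self_eq_one_iff.mp ?_
      have h1 : χ ((ε 1 * ε 1 : A)) = 1 := by
        rw [he2]
        exact map_one χ
      calc χ (ε 1) * χ (ε 1) = χ ((ε 1 * ε 1 : A)) := (map_mul χ (ε 1) (ε 1)).symm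
        _ = 1 := h1
    -- norm bound for characters
    have hchn : ∀ (χ : WeakDual.characterSpace ℂ (KCsyn A α)) (x : KCsyn A α),
        ‖χ x‖ ≤ ‖x‖ := fun χ x =>
      spectrum.norm_le_norm_of_mem (AlgHom.apply_mem_spectrum χ x)
    -- continuity of evaluations
    have hev : ∀ x : A, Continuous fun χ : WeakDual.characterSpace ℂ (KCsyn A α) => (χ x : ℂ) :=
      fun x => (WeakDual.eval_continuous (show KCsyn A α from x)).comp continuous_subtype_val
    -- clopen set
    have hcl1 : IsClosed {χ : WeakDual.characterSpace ℂ (KCsyn A α) | χ (ε 1) = (1:ℂ)} :=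
      isClosed_eq (hev (ε 1)) continuous_const
    have hcl2 : IsClosed {χ : WeakDual.characterSpace ℂ (KCsyn A α) | χ (ε 1) = (-1:ℂ)} :=
      isClosed_eq (hev (ε 1)) continuous_const
    have hop1 : IsOpen {χ : WeakDual.characterSpace ℂ (KCsyn A α) | χ (ε 1) = (1:ℂ)} := by
      have hseteq : {χ : WeakDual.characterSpace ℂ (KCsyn A α) | χ (ε 1) = (1:ℂ)}
          = {χ : WeakDual.characterSpace ℂ (KCsyn A α) | χ (ε 1) = (-1:ℂ)}ᶜ := by
        ext χ
        simp only [Set.mem_setOf_eq, Set.mem_compl_iff]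
        constructor
        · intro h h'
          rw [h] at h'
          norm_num at h'
        · intro h
          exact (hdi χ).resolve_right h
      rw [hseteq]
      exact hcl2.isOpen_compl
    have hfr : frontier {χ : WeakDual.characterSpace ℂ (KCsyn A α) | χ (ε 1) = (1:ℂ)} = ∅ := by
      rw [frontier, IsClosed.closure_eq hcl1, IsOpen.interior_eq hop1]
      exact Set.diff_self
    -- the map Ψ from characters to even matrix characters
    obtain ⟨Ψ, hΨc, hΨ1, hΨ2⟩ :
        ∃ Ψ : WeakDual.characterSpace ℂ (KCsyn A α) →
          {w : A → Matrix (Fin 2) (Fin 2) ℂ // IsKChar α w ∧ IsEven ε w},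
          Continuous Ψ ∧
          (∀ χ, χ (ε 1) = (1:ℂ) → ∀ x : A, (Ψ χ).1 x = Wc α (fun y : A => χ y) x) ∧
          (∀ χ, χ (ε 1) = (-1:ℂ) → ∀ x : A, (Ψ χ).1 x = Wc α (fun y : A => χ (α y)) x) := by
      have hmem1 : ∀ χ : WeakDual.characterSpace ℂ (KCsyn A α), χ (ε 1) = (1:ℂ) →
          IsKChar α (Wc α (fun y : A => χ y)) ∧ IsEven ε (Wc α (fun y : A => χ y)) := by
        intro χ h1
        exact Wc_mem α ε _ hα1 hadd hsmul hmul hstar hinvol hεx hαe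
          (map_one χ) (fun x y => map_add χ x y)
          (fun c x => (map_smul χ c x).trans (smul_eq_mul ..))
          (fun x y => map_mul χ x y)
          (fun x => map_star χ x) h1
      have hmem2 : ∀ χ : WeakDual.characterSpace ℂ (KCsyn A α), χ (ε 1) = (-1:ℂ) →
          IsKChar α (Wc α (fun y : A => χ (α y))) ∧ IsEven ε (Wc α (fun y : A => χ (α y))) := by
        intro χ h1
        refine Wc_mem α ε _ hα1 hadd hsmul hmul hstar hinvol hεx hαe ?_ ?_ ?_ ?_ ?_ ?_
        · show χ (α 1) = 1
          rw [hα1]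
          exact map_one χ
        · intro x y
          show χ (α (x + y)) = χ (α x) + χ (α y)
          rw [hadd]
          exact map_add χ _ _
        · intro c x
          show χ (α (c • x)) = c * χ (α x)
          rw [hsmul]
          exact (map_smul χ c (α x)).trans (smul_eq_mul ..)
        · intro x y
          show χ (α (x * y)) = χ (α x) * χ (α y)
          rw [hmul]
          exact map_mul χ _ _
        · intro x
          show χ (α (α (star x))) = starRingEnd ℂ (χ (α x))
          rw [hinvol]
          have h : χ ((α (star (α x)) : A)) = starRingEnd ℂ (χ (α x)) := map_star χ (α x)
          rwa [← hstar, hinvol] at h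
        · show χ (α (ε 1)) = 1
          rw [hαe, show χ ((-ε 1 : A)) = -χ (ε 1) from map_neg χ _, h1, neg_neg]
      refine ⟨fun χ => if h : χ (ε 1) = (1:ℂ) then ⟨Wc α (fun y : A => χ y), hmem1 χ h⟩
          else ⟨Wc α (fun y : A => χ (α y)), hmem2 χ ((hdi χ).resolve_left h)⟩, ?_, ?_, ?_⟩
      · apply continuous_induced_rng.2
        have hc1 : Continuous fun χ : WeakDual.characterSpace ℂ (KCsyn A α) =>
            Wc α (fun y : A => χ y) := by
          apply continuous_pi
          intro x
          apply cont_into_matrix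
          intro i j
          fin_cases i <;> fin_cases j <;>
            · simp only [Wc, Matrix.cons_val', Matrix.cons_val_zero, Matrix.empty_val',
                Matrix.cons_val_fin_one, Matrix.cons_val_one, Matrix.head_cons,
                Matrix.head_fin_const, Matrix.of_apply, Fin.isValue]
              first
              | exact ((hev x).add (hev (α x))).div_const 2
              | exact ((hev x).sub (hev (α x))).div_const 2
        have hc2 : Continuous fun χ : WeakDual.characterSpace ℂ (KCsyn A α) =>
            Wc α (fun y : A => χ (α y)) := by
          apply continuous_pi
          intro x
          apply cont_into_matrix
          intro i j
          fin_cases i <;> fin_cases j <;>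
            · simp only [Wc, Matrix.cons_val', Matrix.cons_val_zero, Matrix.empty_val',
                Matrix.cons_val_fin_one, Matrix.cons_val_one, Matrix.head_cons,
                Matrix.head_fin_const, Matrix.of_apply, Fin.isValue]
              first
              | exact ((hev (α x)).add (hev (α (α x)))).div_const 2
              | exact ((hev (α x)).sub (hev (α (α x)))).div_const 2
        have hcif : Continuous fun χ : WeakDual.characterSpace ℂ (KCsyn A α) =>
            if χ (ε 1) = (1:ℂ) then Wc α (fun y : A => χ y)
            else Wc α (fun y : A => χ (α y)) := by
          refine Continuous.if ?_ hc1 hc2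
          intro χ hχ
          rw [hfr] at hχ
          exact hχ.elim
        exact hcif.congr (fun χ => by by_cases h : χ (ε 1) = (1:ℂ) <;> simp [h])
      · intro χ h x
        simp only [dif_pos h]
      · intro χ h x
        have h' : ¬ (χ (ε 1) = (1:ℂ)) := by
          rw [h]
          norm_num
        simp only [dif_neg h']
    -- the map Φ from even matrix characters to characters of KCsyn
    obtain ⟨Φ, hΦ⟩ :
        ∃ Φ : {w : A → Matrix (Fin 2) (Fin 2) ℂ // IsKChar α w ∧ IsEven ε w} →
          WeakDual.characterSpace ℂ (KCsyn A α),
          ∀ w (x : A), Φ w x = w.1 x 0 0 + w.1 x 0 1 := by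
      refine ⟨fun w => WeakDual.CharacterSpace.equivAlgHom.symm
        { toFun := fun x : A => w.1 x 0 0 + w.1 x 0 1
          map_one' := ?_
          map_mul' := ?_
          map_zero' := ?_
          map_add' := ?_
          commutes' := ?_ }, fun w x => rfl⟩
      · exact (w_props α ε w.1 w.2.1 w.2.2).2.1
      · exact (w_props α ε w.1 w.2.1 w.2.2).2.2.2.2.1
      · show w.1 (0 : A) 0 0 + w.1 (0 : A) 0 1 = 0
        rw [(w_props α ε w.1 w.2.1 w.2.2).1]
        simp
      · exact (w_props α ε w.1 w.2.1 w.2.2).2.2.1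
      · intro c
        show w.1 ((algebraMap ℂ A c : A)) 0 0 + w.1 ((algebraMap ℂ A c : A)) 0 1
          = algebraMap ℂ ℂ c
        rw [Algebra.algebraMap_eq_smul_one, (w_props α ε w.1 w.2.1 w.2.2).2.2.2.1 c 1,
          (w_props α ε w.1 w.2.1 w.2.2).2.1, mul_one]
        simp
    have hΦe1 : ∀ w, Φ w (ε 1) = 1 := fun w => by
      rw [hΦ w (ε 1)]
      exact (w_props α ε w.1 w.2.1 w.2.2).2.2.2.2.2.2.1
    have hrec : ∀ w (x : A), w.1 x = Wc α (fun y : A => Φ w y) x := by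
      intro w x
      have hfe : (fun y : A => Φ w y) = fun y : A => w.1 y 0 0 + w.1 y 0 1 :=
        funext (hΦ w)
      rw [hfe]
      exact (w_props α ε w.1 w.2.1 w.2.2).2.2.2.2.2.2.2 x
    have hΨΦ : ∀ w, Ψ (Φ w) = w := by
      intro w
      apply Subtype.ext
      funext x
      rw [hΨ1 (Φ w) (hΦe1 w) x, ← hrec w x]
    -- injectivity
    have hinj : ∀ a b : A,
        (∀ w : {w : A → Matrix (Fin 2) (Fin 2) ℂ // IsKChar α w ∧ IsEven ε w},
          w.1 a = w.1 b) → a = b := by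
      intro a b hab
      have hchi : ∀ χ : WeakDual.characterSpace ℂ (KCsyn A α), χ (a : KCsyn A α) = χ b := by
        intro χ
        rcases hdi χ with h | h
        · have hWab : Wc α (fun y : A => χ y) a = Wc α (fun y : A => χ y) b := by
            rw [← hΨ1 χ h a, ← hΨ1 χ h b]
            exact hab (Ψ χ)
          have h00 := congrFun (congrFun hWab 0) 0
          have h01 := congrFun (congrFun hWab 0) 1
          have := Wc_pl α (fun y : A => χ y) a
          rw [h00, h01, Wc_pl α (fun y : A => χ y) b] at this
          exact this.symm
        · have hWab : Wc α (fun y : A => χ (α y)) a = Wc α (fun y : A => χ (α y)) b := by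
            rw [← hΨ2 χ h a, ← hΨ2 χ h b]
            exact hab (Ψ χ)
          have h00 := congrFun (congrFun hWab 0) 0
          have h01 := congrFun (congrFun hWab 0) 1
          have hA := Wc_mn α (fun y : A => χ (α y)) a
          rw [h00, h01, Wc_mn α (fun y : A => χ (α y)) b] at hA
          simp only [hinvol] at hA
          exact hA.symm
      have hT : WeakDual.gelfandTransform ℂ (KCsyn A α) a = WeakDual.gelfandTransform ℂ (KCsyn A α) b := by
        ext χ
        show (χ a : ℂ) = χ b
        exact hchi χ
      exact (gelfandTransform_bijective (KCsyn A α)).1 hT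
    -- surjectivity
    have hsurj : ∀ f : {w : A → Matrix (Fin 2) (Fin 2) ℂ // IsKChar α w ∧ IsEven ε w}
        → Matrix (Fin 2) (Fin 2) ℂ,
        Continuous f → (∀ w, Kmem (f w)) → ∃ a : A, ∀ w, w.1 a = f w := by
      intro f hf hKf
      have hgc : Continuous (fun χ : WeakDual.characterSpace ℂ (KCsyn A α) =>
          if χ (ε 1) = (1:ℂ) then f (Ψ χ) 0 0 + f (Ψ χ) 0 1
          else f (Ψ χ) 0 0 - f (Ψ χ) 0 1) := by
        refine Continuous.if ?_ ?_ ?_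
        · intro χ hχ
          rw [hfr] at hχ
          exact hχ.elim
        · exact (((matrix_entry_cont 0 0).comp (hf.comp hΨc)).add
            ((matrix_entry_cont 0 1).comp (hf.comp hΨc)))
        · exact (((matrix_entry_cont 0 0).comp (hf.comp hΨc)).sub
            ((matrix_entry_cont 0 1).comp (hf.comp hΨc)))
      obtain ⟨a, ha⟩ := (gelfandTransform_bijective (KCsyn A α)).2 ⟨_, hgc⟩
      have ha' : ∀ χ : WeakDual.characterSpace ℂ (KCsyn A α),
          χ a = if χ (ε 1) = (1:ℂ) then f (Ψ χ) 0 0 + f (Ψ χ) 0 1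
            else f (Ψ χ) 0 0 - f (Ψ χ) 0 1 := by
        intro χ
        have h := ContinuousMap.congr_fun ha χ
        rwa [WeakDual.gelfandTransform_apply_apply] at h
      refine ⟨a, fun w => ?_⟩
      have h1 : Φ w a = f w 0 0 + f w 0 1 := by
        rw [ha' (Φ w), if_pos (hΦe1 w), hΨΦ w]
      have hχ2e : χα (Φ w) (ε 1) = -1 := by
        show Φ w (α (ε 1)) = -1
        rw [hαe, show Φ w ((-ε 1 : A)) = -Φ w (ε 1) from map_neg (Φ w) _, hΦe1 w]
      have hΨχ2 : Ψ (χα (Φ w)) = w := by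
        apply Subtype.ext
        funext x
        rw [hΨ2 _ hχ2e x]
        have hfe : (fun y : A => χα (Φ w) (α y)) = fun y : A => Φ w y := by
          funext y
          show Φ w (α (α y)) = Φ w y
          rw [hinvol]
        rw [hfe, ← hrec w x]
      have h2 : Φ w (α a) = f w 0 0 - f w 0 1 := by
        have := ha' (χα (Φ w))
        rw [if_neg (by rw [hχ2e]; norm_num), hΨχ2] at this
        exact this
      rw [hrec w a, Kmem_eq (hKf w)]
      ext i j
      fin_cases i <;> fin_cases j <;>
        simp [Wc, h1, h2] <;> ring
    -- the isometry
    have hwnorm : ∀ (w : {w : A → Matrix (Fin 2) (Fin 2) ℂ // IsKChar α w ∧ IsEven ε w})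
        (x : A), ‖w.1 x‖ = max ‖Φ w x‖ ‖Φ w (α x)‖ := by
      intro w x
      rw [Knorm_of_mem (w.2.1.1 x)]
      congr 1
      · rw [hΦ w x]
      · rw [hΦ w (α x), w.2.1.2.2.2.2.2.2 x]
        have : Kgamma (w.1 x) 0 0 + Kgamma (w.1 x) 0 1 = w.1 x 0 0 - w.1 x 0 1 := by
          simp [Kgamma]
          ring
        rw [this]
    have hiso : ∀ a : A,
        (⨆ w : {w : A → Matrix (Fin 2) (Fin 2) ℂ // IsKChar α w ∧ IsEven ε w}, ‖w.1 a‖)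
          = ‖a‖ := by
      intro a
      have hub : ∀ w : {w : A → Matrix (Fin 2) (Fin 2) ℂ // IsKChar α w ∧ IsEven ε w},
          ‖w.1 a‖ ≤ ‖a‖ := by
        intro w
        rw [hwnorm w a]
        apply max_le
        · exact hchn (Φ w) a
        · exact hchn (χα (Φ w)) a
      have hbdd : BddAbove (Set.range fun w :
          {w : A → Matrix (Fin 2) (Fin 2) ℂ // IsKChar α w ∧ IsEven ε w} => ‖w.1 a‖) := by
        refine ⟨‖a‖, ?_⟩
        rintro - ⟨w, rfl⟩
        exact hub w
      haveI hne : Nonempty {w : A → Matrix (Fin 2) (Fin 2) ℂ // IsKChar α w ∧ IsEven ε w} :=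
        ⟨Ψ (Classical.arbitrary _)⟩
      apply le_antisymm
      · exact ciSup_le hub
      · have h1 : ‖a‖ = ‖WeakDual.gelfandTransform ℂ (KCsyn A α) a‖ :=
          ((gelfandTransform_isometry (KCsyn A α)).norm_map_of_map_zero (map_zero _) a).symm
        rw [h1]
        have h0 : (0:ℝ) ≤ ⨆ w : {w : A → Matrix (Fin 2) (Fin 2) ℂ // IsKChar α w ∧ IsEven ε w},
            ‖w.1 a‖ :=
          le_trans (norm_nonneg _) (le_ciSup hbdd (Classical.arbitrary _))
        rw [ContinuousMap.norm_le _ h0]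
        intro χ
        show ‖(χ a : ℂ)‖ ≤ _
        have hkey : ‖(χ a : ℂ)‖ ≤ ‖(Ψ χ).1 a‖ := by
          rw [hwnorm (Ψ χ) a]
          rcases hdi χ with h | h
          · refine le_trans ?_ (le_max_left _ _)
            have heq : Φ (Ψ χ) a = χ a := by
              rw [hΦ (Ψ χ) a, hΨ1 χ h a, Wc_pl]
            rw [heq]
          · refine le_trans ?_ (le_max_right _ _)
            have heq : Φ (Ψ χ) (α a) = χ a := by
              rw [hΦ (Ψ χ) (α a), hΨ2 χ h (α a), Wc_pl]
              show χ (α (α a)) = χ a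
              rw [hinvol]
            rw [heq]
        exact hkey.trans (le_ciSup hbdd (Ψ χ))
    exact ⟨hcont1, fun a w => w.2.1.1 a, fun a b w => ⟨w.2.1.2.2.2.1 a b, w.2.1.2.1 a b⟩,
      fun c a w => w.2.1.2.2.1 c a, fun w => w.2.1.2.2.2.2.1, fun a w => w.2.1.2.2.2.2.2.1 a,
      hinj, hsurj, hiso⟩
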